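/- Let C be a Polish space with a countable base {B_n : n ∈ ω} such that each B_n is homeomorphic to C. If C contains a Luzin set, then C contains a Luzin set that is dense and locally uncountable (every non-empty relatively open subset is uncountable). -/

import Mathlib

open Set Cardinal TopologicalSpace

/-- A Luzin set: an uncountable set meeting every meagre set in a countable set. -/
def IsLuzin {C : Type*} [TopologicalSpace C] (L : Set C) : Prop :=
  Cardinal.aleph0 < #L ∧
  ∀ M : Set C, IsMeagre M → #(L ∩ M : Set C) ≤ Cardinal.aleph0

/-- If a Polish space with a countable base of copies of itself contains a Luzin set, then it
contains a dense, locally uncountable Luzin set. -/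
theorem statement10 (C : Type*) [TopologicalSpace C] [PolishSpace C]
    (B : ℕ → Set C) (hbasis : TopologicalSpace.IsTopologicalBasis (Set.range B))
    (hhomeo : ∀ n, Nonempty (↥(B n) ≃ₜ C))
    (hL : ∃ L : Set C, IsLuzin L) :
    ∃ L : Set C, IsLuzin L ∧ Dense L ∧
      ∀ U : Set ↥L, IsOpen U → U.Nonempty → Cardinal.aleph0 < #U := by
  obtain ⟨L₀, hL₀big, hL₀meag⟩ := hL
  have e : ∀ n, ↥(B n) ≃ₜ C := fun n => (hhomeo n).some
  have hBopen : ∀ n, IsOpen (B n) := fun n => hbasis.isOpen (mem_range_self n)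
  -- the transported Luzin sets
  set Ln : ℕ → Set C := fun n => Subtype.val '' ((e n) ⁻¹' L₀) with hLn
  have hLnsub : ∀ n, Ln n ⊆ B n := fun n => by
    simp only [hLn]; exact fun x ⟨y, _, hy⟩ => hy ▸ y.2
  have hLncard : ∀ n, Cardinal.aleph0 < #(Ln n) := by
    intro n
    rw [hLn]
    rw [Cardinal.mk_image_eq Subtype.val_injective,
      Cardinal.mk_preimage_of_injective_of_subset_range _ _ (e n).injective
        (by rw [(e n).surjective.range_eq]; exact Set.subset_univ _)]
    exact hL₀big
  have hLnmeag : ∀ n, ∀ M : Set C, IsMeagre M → #(Ln n ∩ M : Set C) ≤ Cardinal.aleph0 := by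
    intro n M hM
    -- M restricted to B n is meagre there
    have h1 : IsMeagre ((Subtype.val : ↥(B n) → C) ⁻¹' M) :=
      hM.preimage_of_isOpenMap continuous_subtype_val (hBopen n).isOpenMap_subtype_val
    -- push forward through e n
    have h2 : IsMeagre ((e n).symm ⁻¹' ((Subtype.val : ↥(B n) → C) ⁻¹' M)) :=
      h1.preimage_of_isOpenMap (e n).symm.continuous (e n).symm.isOpenMap
    have key : Ln n ∩ M = Subtype.val '' ((e n) ⁻¹' L₀ ∩ (Subtype.val ⁻¹' M)) := by
      rw [hLn, Set.image_inter_preimage]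
    rw [key, Cardinal.mk_image_eq Subtype.val_injective]
    have himg : #(((e n) ⁻¹' L₀ ∩ (Subtype.val ⁻¹' M)) : Set ↥(B n))
        = #((L₀ ∩ ((e n).symm ⁻¹' (Subtype.val ⁻¹' M))) : Set C) := by
      rw [← Cardinal.mk_image_eq (f := (e n)) (e n).injective, Set.image_inter (e n).injective,
        Set.image_preimage_eq _ (e n).surjective,
        show ⇑(e n) '' (Subtype.val ⁻¹' M) = ⇑(e n).symm ⁻¹' (Subtype.val ⁻¹' M) from
          (e n).toEquiv.image_eq_preimage_symm _]
    rw [himg]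
    exact hL₀meag _ h2
  refine ⟨⋃ n, Ln n, ⟨?_, ?_⟩, ?_, ?_⟩
  · exact lt_of_lt_of_le (hLncard 0) (Cardinal.mk_le_mk_of_subset (Set.subset_iUnion Ln 0))
  · intro M hM
    rw [Set.iUnion_inter, Cardinal.mk_le_aleph0_iff]
    exact Set.countable_iUnion fun n => Cardinal.mk_le_aleph0_iff.mp (hLnmeag n M hM)
  · rw [dense_iff_inter_open]
    intro V hV ⟨x, hx⟩
    obtain ⟨b, ⟨n, rfl⟩, hxb, hbV⟩ := hbasis.exists_subset_of_mem_open hx hV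
    have : (Ln n).Nonempty := Set.nonempty_coe_sort.mp
      (Cardinal.mk_ne_zero_iff.mp ((Cardinal.aleph0_pos.trans (hLncard n)).ne'))
    obtain ⟨y, hy⟩ := this
    exact ⟨y, hbV (hLnsub n hy), Set.mem_iUnion.mpr ⟨n, hy⟩⟩
  · intro U hU ⟨⟨x, hxL⟩, hxU⟩
    obtain ⟨V, hV, rfl⟩ := isOpen_induced_iff.mp hU
    have hxV : x ∈ V := hxU
    obtain ⟨b, ⟨n, rfl⟩, hxb, hbV⟩ := hbasis.exists_subset_of_mem_open hxV hV
    have hinj : Function.Injective (fun y : ↥(Ln n) =>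
        (⟨⟨y.1, Set.mem_iUnion.mpr ⟨n, y.2⟩⟩, hbV (hLnsub n y.2)⟩ :
          ↥(Subtype.val ⁻¹' V : Set ↥(⋃ n, Ln n)))) := by
      intro a b hab
      simp only [Subtype.mk.injEq] at hab
      exact Subtype.ext hab
    exact lt_of_lt_of_le (hLncard n) (Cardinal.mk_le_of_injective hinj)
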